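/- arXiv:2603.05306 — 3 statements merged into one kernel-verified Lean document; each statement's English description precedes it below -/
import Mathlib

section
/- Let p ≥ 4 and b ∈ [0, 1/2). Let A be the symmetric matrix indexed by I = {(i,j) : 1 ≤ i < j ≤ p} with entries A_{e,f} = 1 if e = f, A_{e,f} = b if the pairs e and f share exactly one element, and A_{e,f} = 0 if they are disjoint. Then the smallest eigenvalue of A equals 1 − 2b. -/
open Finset

/-- The matrix on unordered pairs from `{1,…,p}`: diagonal `1`, entries `b` for pairs
sharing exactly one element, `0` for disjoint pairs. -/
noncomputable def pairMatrix (p : ℕ) (b : ℝ) :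
    Matrix {e : Finset (Fin p) // e.card = 2} {e : Finset (Fin p) // e.card = 2} ℝ :=
  fun e f => if e = f then 1 else if (e.1 ∩ f.1).card = 1 then b else 0

open Matrix

namespace PairAux

noncomputable def vvec (p : ℕ) (a01 a23 a02 a13 : {e : Finset (Fin p) // e.card = 2}) :
    {e : Finset (Fin p) // e.card = 2} → ℝ :=
  fun e => if e = a01 ∨ e = a23 then 1 else if e = a02 ∨ e = a13 then -1 else 0

noncomputable def Nmat (p : ℕ) : Matrix {e : Finset (Fin p) // e.card = 2} (Fin p) ℝ :=
  fun e i => if i ∈ e.1 then 1 else 0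

set_option maxHeartbeats 1000000 in
lemma decomp (p : ℕ) (b : ℝ) :
    pairMatrix p b = (1 - 2 * b) • (1 : Matrix {e : Finset (Fin p) // e.card = 2} _ ℝ)
      + b • (Nmat p * (Nmat p)ᵀ) := by
  ext e f
  have hNN : (Nmat p * (Nmat p)ᵀ) e f = ((e.1 ∩ f.1).card : ℝ) := by
    have h1 : ∀ x : Fin p, ((if x ∈ e.1 then (1:ℝ) else 0) * if x ∈ f.1 then 1 else 0)
        = if x ∈ e.1 ∩ f.1 then 1 else 0 := by
      intro x
      by_cases hx : x ∈ e.1 <;> by_cases hy : x ∈ f.1 <;> simp [hx, hy]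
    simp only [Matrix.mul_apply, Nmat, Matrix.transpose_apply]
    rw [Finset.sum_congr rfl fun x _ => h1 x, Finset.sum_ite_mem, Finset.univ_inter,
      Finset.sum_const]
    simp
  by_cases h : e = f
  · subst h
    have : e.1 ∩ e.1 = e.1 := Finset.inter_self _
    simp [pairMatrix, hNN, Matrix.one_apply, this, e.2]
    ring
  · have hle : (e.1 ∩ f.1).card ≤ 1 := by
      by_contra hgt
      push_neg at hgt
      have h2 : (e.1 ∩ f.1).card ≤ 2 := le_trans (Finset.card_le_card (Finset.inter_subset_left)) (le_of_eq e.2)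
      have hc2 : (e.1 ∩ f.1).card = 2 := le_antisymm h2 hgt
      have he : e.1 ∩ f.1 = e.1 :=
        Finset.eq_of_subset_of_card_le Finset.inter_subset_left
          (by rw [hc2, e.2])
      have hsub : e.1 ⊆ f.1 := he ▸ Finset.inter_subset_right
      exact h (Subtype.ext (Finset.eq_of_subset_of_card_le hsub (by rw [e.2, f.2])))
    interval_cases hc : (e.1 ∩ f.1).card
    · simp [pairMatrix, hNN, Matrix.one_apply, h, hc]
    · simp [pairMatrix, hNN, Matrix.one_apply, h, hc]


set_option maxHeartbeats 1000000 in
lemma key (p : ℕ) (hp : 4 ≤ p) :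
    ∃ v : {e : Finset (Fin p) // e.card = 2} → ℝ,
      v ≠ 0 ∧ Matrix.mulVec (Nmat p)ᵀ v = 0 := by
  have i0 : Fin p := ⟨0, by omega⟩
  set i0 : Fin p := ⟨0, by omega⟩ with hi0
  set i1 : Fin p := ⟨1, by omega⟩ with hi1
  set i2 : Fin p := ⟨2, by omega⟩ with hi2
  set i3 : Fin p := ⟨3, by omega⟩ with hi3
  have ne01 : i0 ≠ i1 := by simp [hi0, hi1, Fin.ext_iff]
  have ne02 : i0 ≠ i2 := by simp [hi0, hi2, Fin.ext_iff]
  have ne03 : i0 ≠ i3 := by simp [hi0, hi3, Fin.ext_iff]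
  have ne12 : i1 ≠ i2 := by simp [hi1, hi2, Fin.ext_iff]
  have ne13 : i1 ≠ i3 := by simp [hi1, hi3, Fin.ext_iff]
  have ne23 : i2 ≠ i3 := by simp [hi2, hi3, Fin.ext_iff]
  have cpair : ∀ a c : Fin p, a ≠ c → ({a, c} : Finset (Fin p)).card = 2 := by
    intro a c hac
    rw [Finset.card_insert_of_notMem (by simp [hac]), Finset.card_singleton]
  set a01 : {e : Finset (Fin p) // e.card = 2} := ⟨{i0, i1}, cpair _ _ ne01⟩ with ha01
  set a23 : {e : Finset (Fin p) // e.card = 2} := ⟨{i2, i3}, cpair _ _ ne23⟩ with ha23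
  set a02 : {e : Finset (Fin p) // e.card = 2} := ⟨{i0, i2}, cpair _ _ ne02⟩ with ha02
  set a13 : {e : Finset (Fin p) // e.card = 2} := ⟨{i1, i3}, cpair _ _ ne13⟩ with ha13
  have sne : ∀ (s t : Finset (Fin p)) (x : Fin p), x ∈ s → x ∉ t → s ≠ t :=
    fun s t x hx hnx h => hnx (h ▸ hx)
  have n1 : a01 ≠ a23 := fun h => (sne {i0,i1} {i2,i3} i0 (by simp)
    (by simp [ne02, ne03])) (congrArg Subtype.val h)
  have n2 : a01 ≠ a02 := fun h => (sne {i0,i1} {i0,i2} i1 (by simp)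
    (by simp [ne01.symm, ne12])) (congrArg Subtype.val h)
  have n3 : a01 ≠ a13 := fun h => (sne {i0,i1} {i1,i3} i0 (by simp)
    (by simp [ne01, ne03])) (congrArg Subtype.val h)
  have n4 : a23 ≠ a02 := fun h => (sne {i2,i3} {i0,i2} i3 (by simp)
    (by simp [ne03.symm, ne23.symm])) (congrArg Subtype.val h)
  have n5 : a23 ≠ a13 := fun h => (sne {i2,i3} {i1,i3} i2 (by simp)
    (by simp [ne12.symm, ne23])) (congrArg Subtype.val h)
  have n6 : a02 ≠ a13 := fun h => (sne {i0,i2} {i1,i3} i0 (by simp)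
    (by simp [ne01, ne03])) (congrArg Subtype.val h)
  refine ⟨vvec p a01 a23 a02 a13, ?_, ?_⟩
  · intro h
    have h1 := congrFun h a01
    simp [vvec] at h1
  · funext i
    have hterm : Matrix.mulVec (Nmat p)ᵀ (vvec p a01 a23 a02 a13) i
        = ∑ e : {e : Finset (Fin p) // e.card = 2},
            (if i ∈ e.1 then (1:ℝ) else 0) * vvec p a01 a23 a02 a13 e := by
      simp [Matrix.mulVec, dotProduct, Nmat, Matrix.transpose_apply]
    rw [Pi.zero_apply, hterm]
    have hsub : ({a01, a23, a02, a13} : Finset {e : Finset (Fin p) // e.card = 2}) ⊆ univ :=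
      Finset.subset_univ _
    rw [← Finset.sum_subset hsub (by
      intro e _ he
      simp only [Finset.mem_insert, Finset.mem_singleton, not_or] at he
      obtain ⟨e1, e2, e3, e4⟩ := he
      simp [vvec, e1, e2, e3, e4])]
    rw [Finset.sum_insert (by simp [n1, n2, n3]),
        Finset.sum_insert (by simp [n4, n5]),
        Finset.sum_insert (by simp [n6]),
        Finset.sum_singleton]
    have v01 : vvec p a01 a23 a02 a13 a01 = 1 := by simp [vvec]
    have v23 : vvec p a01 a23 a02 a13 a23 = 1 := by simp [vvec]
    have v02 : vvec p a01 a23 a02 a13 a02 = -1 := by simp [vvec, n2.symm, n4.symm]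
    have v13 : vvec p a01 a23 a02 a13 a13 = -1 := by simp [vvec, n3.symm, n5.symm]
    rw [v01, v23, v02, v13]
    have m01 : i ∈ a01.1 ↔ (i = i0 ∨ i = i1) := by simp [ha01]
    have m23 : i ∈ a23.1 ↔ (i = i2 ∨ i = i3) := by simp [ha23]
    have m02 : i ∈ a02.1 ↔ (i = i0 ∨ i = i2) := by simp [ha02]
    have m13 : i ∈ a13.1 ↔ (i = i1 ∨ i = i3) := by simp [ha13]
    by_cases h0 : i = i0 <;> by_cases h1 : i = i1 <;> by_cases h2 : i = i2 <;>
      by_cases h3 : i = i3 <;>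
      simp [m01, m23, m02, m13, h0, h1, h2, h3] <;>
      simp_all [hi0, hi1, hi2, hi3, Fin.ext_iff] <;> norm_num

end PairAux

theorem stmt2 (p : ℕ) (hp : 4 ≤ p) (b : ℝ) (hb0 : 0 ≤ b) (hb : b < 1 / 2) :
    IsLeast (spectrum ℝ (pairMatrix p b)) (1 - 2 * b) := by
  classical
  constructor
  · -- membership
    obtain ⟨v, hv0, hNv⟩ := PairAux.key p hp
    have hAv : (pairMatrix p b).mulVec v = (1 - 2 * b) • v := by
      rw [PairAux.decomp p b, Matrix.add_mulVec, Matrix.smul_mulVec,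
        Matrix.smul_mulVec, Matrix.one_mulVec, ← Matrix.mulVec_mulVec, hNv,
        Matrix.mulVec_zero, smul_zero, add_zero]
    rw [spectrum.mem_iff]
    intro hunit
    rw [Matrix.isUnit_iff_isUnit_det] at hunit
    have hdet : (algebraMap ℝ (Matrix _ _ ℝ) (1 - 2 * b) - pairMatrix p b).det = 0 := by
      rw [← Matrix.exists_mulVec_eq_zero_iff]
      refine ⟨v, hv0, ?_⟩
      rw [Algebra.algebraMap_eq_smul_one, Matrix.sub_mulVec, Matrix.smul_mulVec,
        Matrix.one_mulVec, hAv, sub_self]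
    rw [hdet] at hunit
    exact hunit.ne_zero rfl
  · -- lower bound
    intro lam hlam
    rw [spectrum.mem_iff] at hlam
    have hdet : (algebraMap ℝ (Matrix _ _ ℝ) lam - pairMatrix p b).det = 0 := by
      by_contra hne
      exact hlam (Matrix.isUnit_iff_isUnit_det _ |>.2 (isUnit_iff_ne_zero.2 hne))
    obtain ⟨v, hv0, hMv⟩ := (Matrix.exists_mulVec_eq_zero_iff).2 hdet
    rw [Algebra.algebraMap_eq_smul_one, Matrix.sub_mulVec, Matrix.smul_mulVec,
      Matrix.one_mulVec, sub_eq_zero] at hMv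
    have hAv : (pairMatrix p b).mulVec v = lam • v := hMv.symm
    set w : Fin p → ℝ := Matrix.mulVec (PairAux.Nmat p)ᵀ v with hw
    have hq : lam * (v ⬝ᵥ v) = (1 - 2 * b) * (v ⬝ᵥ v) + b * (w ⬝ᵥ w) := by
      have h1 : v ⬝ᵥ (pairMatrix p b).mulVec v = lam * (v ⬝ᵥ v) := by
        rw [hAv, dotProduct_smul]
        simp
      have h2 : v ⬝ᵥ (pairMatrix p b).mulVec v
          = (1 - 2 * b) * (v ⬝ᵥ v) + b * (w ⬝ᵥ w) := by
        rw [PairAux.decomp p b, Matrix.add_mulVec, Matrix.smul_mulVec,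
          Matrix.smul_mulVec, Matrix.one_mulVec, dotProduct_add,
          dotProduct_smul, dotProduct_smul, ← Matrix.mulVec_mulVec,
          Matrix.dotProduct_mulVec, hw, Matrix.mulVec_transpose]
        simp [mul_comm]
      rw [← h1, h2]
    have hvv : 0 < v ⬝ᵥ v := by
      rcases lt_or_eq_of_le (Finset.sum_nonneg fun e _ => mul_self_nonneg (v e)) with h | h
      · exact h
      · exact absurd (dotProduct_self_eq_zero.1 h.symm) hv0
    have hww : 0 ≤ w ⬝ᵥ w := Finset.sum_nonneg fun i _ => mul_self_nonneg (w i)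
    nlinarith [mul_nonneg hb0 hww]
end

section
/- With A as above (p ≥ 4, b ∈ [0,1/2)), the spectrum of A consists of exactly the three eigenvalues 1 + 2b(p−2), 1 + b(p−4), and 1 − 2b; the eigenvalue 1 + 2b(p−2) has the all-ones vector as an eigenvector. -/
open Finset Matrix

namespace PairAux

variable (p : ℕ)

/-- incidence matrix -/
noncomputable def NN : Matrix {e : Finset (Fin p) // e.card = 2} (Fin p) ℝ :=
  fun e i => if i ∈ e.1 then 1 else 0

noncomputable def JP : Matrix (Fin p) (Fin p) ℝ := fun _ _ => 1
noncomputable def JE : Matrix {e : Finset (Fin p) // e.card = 2} {e : Finset (Fin p) // e.card = 2} ℝ := fun _ _ => 1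
noncomputable def G : Matrix {e : Finset (Fin p) // e.card = 2} {e : Finset (Fin p) // e.card = 2} ℝ := NN p * (NN p)ᵀ

variable {p}

lemma sum_ind (s : Finset (Fin p)) : ∑ i : Fin p, (if i ∈ s then (1:ℝ) else 0) = s.card := by
  rw [Finset.sum_ite_mem, Finset.univ_inter, Finset.sum_const, nsmul_eq_mul, mul_one]

lemma ind_mul (s t : Finset (Fin p)) (i : Fin p) :
    (if i ∈ s then (1:ℝ) else 0) * (if i ∈ t then 1 else 0) = if i ∈ s ∩ t then 1 else 0 := by
  by_cases hs : i ∈ s <;> by_cases ht : i ∈ t <;> simp [hs, ht]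

lemma NNt_apply (e f : {e : Finset (Fin p) // e.card = 2}) :
    G p e f = ((e.1 ∩ f.1).card : ℝ) := by
  rw [G, Matrix.mul_apply]
  simp only [Matrix.transpose_apply, NN]
  rw [Finset.sum_congr rfl fun i _ => ind_mul e.1 f.1 i, sum_ind]

lemma sum_pair_ind {i j : Fin p} (h : i ≠ j) :
    ∑ e : {e : Finset (Fin p) // e.card = 2},
      (if i ∈ e.1 then (1:ℝ) else 0) * (if j ∈ e.1 then 1 else 0) = 1 := by
  have key : ∀ e : {e : Finset (Fin p) // e.card = 2},
      (if i ∈ e.1 then (1:ℝ) else 0) * (if j ∈ e.1 then 1 else 0)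
        = if e = (⟨{i, j}, Finset.card_pair h⟩ : {e : Finset (Fin p) // e.card = 2}) then 1 else 0 := by
    intro e
    by_cases he : e = ⟨{i, j}, Finset.card_pair h⟩
    · subst he; simp
    · rw [if_neg he]
      by_cases hi : i ∈ e.1
      · by_cases hj : j ∈ e.1
        · exfalso
          apply he
          have hsub : ({i, j} : Finset (Fin p)) ⊆ e.1 := by
            intro x hx
            rcases Finset.mem_insert.mp hx with hx | hx
            · rwa [hx]
            · rw [Finset.mem_singleton.mp hx]; exact hj
          have := Finset.eq_of_subset_of_card_le hsub (by rw [e.2, Finset.card_pair h])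
          exact Subtype.ext this.symm
        · simp [hj]
      · simp [hi]
  rw [Finset.sum_congr rfl fun e _ => key e, Finset.sum_ite_eq' Finset.univ]
  simp

lemma sum_mem_ind (hp : 4 ≤ p) (i : Fin p) :
    ∑ e : {e : Finset (Fin p) // e.card = 2}, (if i ∈ e.1 then (1:ℝ) else 0) = (p : ℝ) - 1 := by
  have key : ∀ e : {e : Finset (Fin p) // e.card = 2},
      (if i ∈ e.1 then (1:ℝ) else 0)
        = ∑ j ∈ Finset.univ.erase i, (if i ∈ e.1 then (1:ℝ) else 0) * (if j ∈ e.1 then 1 else 0) := by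
    intro e
    by_cases hi : i ∈ e.1
    · simp only [hi, if_true, one_mul]
      rw [Finset.sum_ite_mem, Finset.erase_inter, Finset.univ_inter, Finset.sum_const,
        Finset.card_erase_of_mem hi, e.2, nsmul_eq_mul]
      norm_num
    · simp [hi]
  rw [Finset.sum_congr rfl fun e _ => key e, Finset.sum_comm]
  rw [Finset.sum_congr rfl fun j hj => sum_pair_ind (Finset.ne_of_mem_erase hj).symm]
  rw [Finset.sum_const, Finset.card_erase_of_mem (Finset.mem_univ i), Finset.card_univ,
    Fintype.card_fin, nsmul_eq_mul, mul_one]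
  have : (1:ℕ) ≤ p := by omega
  push_cast [Nat.cast_sub this]
  ring


lemma NtN (hp : 4 ≤ p) : (NN p)ᵀ * NN p = ((p:ℝ) - 2) • (1 : Matrix (Fin p) (Fin p) ℝ) + JP p := by
  ext i j
  rw [Matrix.mul_apply]
  simp only [Matrix.transpose_apply, NN, Matrix.add_apply, Matrix.smul_apply, JP, smul_eq_mul]
  by_cases hij : i = j
  · subst hij
    have : ∀ e : {e : Finset (Fin p) // e.card = 2},
        (if i ∈ e.1 then (1:ℝ) else 0) * (if i ∈ e.1 then (1:ℝ) else 0)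
          = if i ∈ e.1 then (1:ℝ) else 0 := by
      intro e; by_cases h : i ∈ e.1 <;> simp [h]
    rw [Finset.sum_congr rfl fun e _ => this e, sum_mem_ind hp, Matrix.one_apply_eq]
    ring
  · rw [sum_pair_ind hij, Matrix.one_apply_ne hij]
    ring

lemma rowsum2 (e : {e : Finset (Fin p) // e.card = 2}) : ∑ i, NN p e i = (2:ℝ) := by
  simp only [NN]
  rw [sum_ind, e.2]
  norm_num

lemma NJNt : NN p * JP p * (NN p)ᵀ = (4:ℝ) • JE p := by
  ext e f
  rw [Matrix.mul_apply]
  have h1 : ∀ i, (NN p * JP p) e i = 2 := by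
    intro i
    rw [Matrix.mul_apply]
    simp only [JP, mul_one]
    exact rowsum2 e
  calc ∑ i, (NN p * JP p) e i * (NN p)ᵀ i f = ∑ i, 2 * NN p f i := by
        refine Finset.sum_congr rfl fun i _ => ?_
        rw [h1 i, Matrix.transpose_apply]
      _ = 2 * ∑ i, NN p f i := by rw [Finset.mul_sum]
      _ = (4:ℝ) • JE p e f := by rw [rowsum2 f]; norm_num [JE]

lemma hGsq (hp : 4 ≤ p) : G p * G p = ((p:ℝ) - 2) • G p + (4:ℝ) • JE p := by
  have : G p * G p = NN p * ((NN p)ᵀ * NN p) * (NN p)ᵀ := by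
    rw [G, Matrix.mul_assoc, Matrix.mul_assoc, Matrix.mul_assoc]
  rw [this, NtN hp, Matrix.mul_add, Matrix.add_mul, Matrix.mul_smul, Matrix.smul_mul,
    Matrix.mul_one, NJNt]
  rfl

lemma sumCap (hp : 4 ≤ p) (e : {e : Finset (Fin p) // e.card = 2}) :
    ∑ g : {e : Finset (Fin p) // e.card = 2}, ((e.1 ∩ g.1).card : ℝ) = 2 * (p:ℝ) - 2 := by
  have key : ∀ g : {e : Finset (Fin p) // e.card = 2}, ((e.1 ∩ g.1).card : ℝ)
      = ∑ i : Fin p, (if i ∈ e.1 then (1:ℝ) else 0) * (if i ∈ g.1 then 1 else 0) := by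
    intro g
    rw [Finset.sum_congr rfl fun i _ => ind_mul e.1 g.1 i, sum_ind]
  rw [Finset.sum_congr rfl fun g _ => key g, Finset.sum_comm]
  have inner : ∀ i : Fin p, ∑ g : {e : Finset (Fin p) // e.card = 2},
      (if i ∈ e.1 then (1:ℝ) else 0) * (if i ∈ g.1 then 1 else 0)
      = (if i ∈ e.1 then (1:ℝ) else 0) * ((p:ℝ) - 1) := by
    intro i
    rw [← Finset.mul_sum, sum_mem_ind hp]
  rw [Finset.sum_congr rfl fun i _ => inner i, ← Finset.sum_mul, sum_ind, e.2]
  push_cast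
  ring

lemma hGJ (hp : 4 ≤ p) : G p * JE p = (2 * (p:ℝ) - 2) • JE p := by
  ext e f
  rw [Matrix.mul_apply]
  simp only [JE, mul_one, Matrix.smul_apply, smul_eq_mul]
  rw [Finset.sum_congr rfl fun g _ => NNt_apply e g, sumCap hp e]

lemma cubic (hp : 4 ≤ p) :
    (G p - (2 * (p:ℝ) - 2) • 1) * (G p * G p - ((p:ℝ) - 2) • G p) = 0 := by
  have h1 : G p * G p - ((p:ℝ) - 2) • G p = (4:ℝ) • JE p := by
    rw [hGsq hp]; abel
  rw [h1, Matrix.sub_mul, Matrix.mul_smul, hGJ hp, Matrix.smul_mul, Matrix.one_mul]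
  rw [smul_smul, smul_smul, mul_comm]
  exact sub_self _

lemma A_eq (b : ℝ) : pairMatrix p b = ((1:ℝ) - 2 * b) • 1 + b • G p := by
  ext e f
  simp only [pairMatrix, Matrix.add_apply, Matrix.smul_apply, smul_eq_mul, NNt_apply]
  by_cases hef : e = f
  · subst hef
    rw [if_pos rfl, Matrix.one_apply_eq, Finset.inter_self, e.2]
    push_cast; ring
  · rw [if_neg hef, Matrix.one_apply_ne hef]
    have hne2 : (e.1 ∩ f.1).card ≠ 2 := by
      intro h2
      have h1 : e.1 ∩ f.1 = e.1 :=
        Finset.eq_of_subset_of_card_le Finset.inter_subset_left (le_of_eq (e.2.trans h2.symm))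
      have h3 : e.1 ⊆ f.1 := by rw [← h1]; exact Finset.inter_subset_right
      have h4 : e.1 = f.1 := Finset.eq_of_subset_of_card_le h3 (le_of_eq (f.2.trans e.2.symm))
      exact hef (Subtype.ext h4)
    have hle : (e.1 ∩ f.1).card ≤ 2 := by
      calc (e.1 ∩ f.1).card ≤ e.1.card := Finset.card_le_card Finset.inter_subset_left
        _ = 2 := e.2
    by_cases h1 : (e.1 ∩ f.1).card = 1
    · rw [if_pos h1, h1]; push_cast; ring
    · rw [if_neg h1]
      have : (e.1 ∩ f.1).card = 0 := by omega
      rw [this]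
      push_cast; ring


lemma mem_spec {n : Type*} [Fintype n] [DecidableEq n] (M : Matrix n n ℝ) (μ : ℝ)
    (v : n → ℝ) (hv : v ≠ 0) (h : M.mulVec v = μ • v) : μ ∈ spectrum ℝ M := by
  rw [spectrum.mem_iff, Matrix.isUnit_iff_isUnit_det, isUnit_iff_ne_zero, not_not,
    ← Matrix.exists_mulVec_eq_zero_iff]
  refine ⟨v, hv, ?_⟩
  rw [Algebra.algebraMap_eq_smul_one, Matrix.sub_mulVec, Matrix.smul_mulVec,
    Matrix.one_mulVec, h, sub_self]

lemma sum_w {i j : Fin p} (h : i ≠ j) :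
    ∑ k : Fin p, ((if k = i then (1:ℝ) else 0) - (if k = j then 1 else 0)) = 0 := by
  rw [Finset.sum_sub_distrib]
  simp [Finset.sum_ite_eq']

lemma NtN_mulVec_w (hp : 4 ≤ p) {i j : Fin p} (h : i ≠ j) :
    ((NN p)ᵀ * NN p).mulVec (fun k => (if k = i then (1:ℝ) else 0) - (if k = j then 1 else 0))
      = ((p:ℝ) - 2) • (fun k => (if k = i then (1:ℝ) else 0) - (if k = j then 1 else 0)) := by
  rw [NtN hp, Matrix.add_mulVec, Matrix.smul_mulVec, Matrix.one_mulVec]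
  have hJ : (JP p).mulVec (fun k => (if k = i then (1:ℝ) else 0) - (if k = j then 1 else 0)) = 0 := by
    funext i'
    simp only [Matrix.mulVec, dotProduct, JP, one_mul, Pi.zero_apply]
    exact sum_w h
  rw [hJ, add_zero]

lemma G_mulVec_w (hp : 4 ≤ p) {i j : Fin p} (h : i ≠ j) :
    (G p).mulVec ((NN p).mulVec (fun k => (if k = i then (1:ℝ) else 0) - (if k = j then 1 else 0)))
      = ((p:ℝ) - 2) • ((NN p).mulVec (fun k => (if k = i then (1:ℝ) else 0) - (if k = j then 1 else 0))) := by
  set w : Fin p → ℝ := fun k => (if k = i then (1:ℝ) else 0) - (if k = j then 1 else 0) with hw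
  have h1 : (NN p)ᵀ *ᵥ (NN p *ᵥ w) = ((p:ℝ) - 2) • w := by
    rw [Matrix.mulVec_mulVec]
    exact NtN_mulVec_w hp h
  rw [G, ← Matrix.mulVec_mulVec, h1, Matrix.mulVec_smul]


lemma v2_val {i j z' : Fin p} (hij : i ≠ j) (hiz : i ≠ z') (hzj : z' ≠ j) :
    ((NN p).mulVec (fun k => (if k = i then (1:ℝ) else 0) - (if k = j then 1 else 0)))
      (⟨{i, z'}, Finset.card_pair hiz⟩ : {e : Finset (Fin p) // e.card = 2}) = 1 := by
  simp only [Matrix.mulVec, dotProduct, NN, ite_mul, one_mul, zero_mul]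
  rw [Finset.sum_ite_mem, Finset.univ_inter, Finset.sum_pair hiz]
  simp [hij, Ne.symm hiz, hzj]

lemma Nt_v3 {x y z u : Fin p} (hxy : x ≠ y) (hxz : x ≠ z) (hxu : x ≠ u) (hyz : y ≠ z)
    (hyu : y ≠ u) (hzu : z ≠ u) :
    (NN p)ᵀ.mulVec (fun e : {e : Finset (Fin p) // e.card = 2} =>
        (if e = ⟨{x, z}, Finset.card_pair hxz⟩ then (1:ℝ) else 0)
      - (if e = ⟨{x, u}, Finset.card_pair hxu⟩ then 1 else 0)
      - (if e = ⟨{y, z}, Finset.card_pair hyz⟩ then 1 else 0)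
      + (if e = ⟨{y, u}, Finset.card_pair hyu⟩ then 1 else 0)) = 0 := by
  funext i
  simp only [Matrix.mulVec, dotProduct, Matrix.transpose_apply, NN, Pi.zero_apply,
    mul_sub, mul_add, mul_ite, mul_one, mul_zero]
  rw [Finset.sum_add_distrib, Finset.sum_sub_distrib, Finset.sum_sub_distrib]
  simp only [Finset.sum_ite_eq', Finset.mem_univ, if_true]
  simp only [Finset.mem_insert, Finset.mem_singleton]
  by_cases h1 : i = x <;> by_cases h2 : i = y <;> by_cases h3 : i = z <;> by_cases h4 : i = u <;>
    simp_all <;> ring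

lemma pair_ne_snd {a b c d : Fin p} (h1 : b ≠ c) (h2 : b ≠ d) :
    ({a, b} : Finset (Fin p)) ≠ {c, d} := by
  intro h
  have : b ∈ ({c, d} : Finset (Fin p)) := h ▸ (by simp)
  simp only [Finset.mem_insert, Finset.mem_singleton] at this
  rcases this with h' | h' <;> [exact h1 h'; exact h2 h']

lemma pair_ne_fst {a b c d : Fin p} (h1 : a ≠ c) (h2 : a ≠ d) :
    ({a, b} : Finset (Fin p)) ≠ {c, d} := by
  intro h
  have : a ∈ ({c, d} : Finset (Fin p)) := h ▸ (by simp)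
  simp only [Finset.mem_insert, Finset.mem_singleton] at this
  rcases this with h' | h' <;> [exact h1 h'; exact h2 h']

end PairAux

open PairAux in
theorem stmt3 (p : ℕ) (hp : 4 ≤ p) (b : ℝ) (hb0 : 0 ≤ b) (hb : b < 1 / 2) :
    spectrum ℝ (pairMatrix p b)
      = {1 + 2 * b * ((p : ℝ) - 2), 1 + b * ((p : ℝ) - 4), 1 - 2 * b} ∧
    (pairMatrix p b).mulVec (fun _ => 1)
      = (1 + 2 * b * ((p : ℝ) - 2)) •
          ((fun _ => 1) : {e : Finset (Fin p) // e.card = 2} → ℝ) := by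
  classical
  -- four distinct elements
  let x : Fin p := ⟨0, by omega⟩
  let y : Fin p := ⟨1, by omega⟩
  let z : Fin p := ⟨2, by omega⟩
  let u : Fin p := ⟨3, by omega⟩
  have hxy : x ≠ y := Fin.ne_of_val_ne (by norm_num)
  have hxz : x ≠ z := Fin.ne_of_val_ne (by norm_num)
  have hxu : x ≠ u := Fin.ne_of_val_ne (by norm_num)
  have hyz : y ≠ z := Fin.ne_of_val_ne (by norm_num)
  have hyu : y ≠ u := Fin.ne_of_val_ne (by norm_num)
  have hzu : z ≠ u := Fin.ne_of_val_ne (by norm_num)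
  -- eigen-equation for the all-ones vector
  have hG1 : (G p).mulVec (fun _ => (1:ℝ)) = fun _ => 2 * (p:ℝ) - 2 := by
    funext e
    simp only [Matrix.mulVec, dotProduct, mul_one]
    rw [Finset.sum_congr rfl fun g _ => NNt_apply e g]
    exact sumCap hp e
  have hA1 : (pairMatrix p b).mulVec (fun _ => (1:ℝ))
      = (1 + 2 * b * ((p : ℝ) - 2)) • (fun _ => (1:ℝ)) := by
    rw [A_eq, Matrix.add_mulVec, Matrix.smul_mulVec, Matrix.one_mulVec,
      Matrix.smul_mulVec, hG1]
    funext e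
    simp only [Pi.add_apply, Pi.smul_apply, smul_eq_mul]
    ring
  refine ⟨?_, hA1⟩
  apply Set.Subset.antisymm
  · -- spectrum ⊆ {...}
    intro μ hμ
    rw [spectrum.mem_iff, Matrix.isUnit_iff_isUnit_det, isUnit_iff_ne_zero, not_not,
      ← Matrix.exists_mulVec_eq_zero_iff] at hμ
    obtain ⟨v, hv, hveq⟩ := hμ
    rw [Algebra.algebraMap_eq_smul_one, Matrix.sub_mulVec, Matrix.smul_mulVec,
      Matrix.one_mulVec, sub_eq_zero] at hveq
    have hAv : (pairMatrix p b).mulVec v = μ • v := hveq.symm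
    obtain ⟨idx, hidx⟩ : ∃ i, v i ≠ 0 := by
      by_contra h
      push_neg at h
      exact hv (funext h)
    simp only [Set.mem_insert_iff, Set.mem_singleton_iff]
    rcases eq_or_ne b 0 with rfl | hbne
    · -- b = 0 : the matrix is the identity
      have hA0 : pairMatrix p (0:ℝ) = 1 := by
        rw [A_eq]
        norm_num
      rw [hA0, Matrix.one_mulVec] at hAv
      have h1 : v idx = μ * v idx := by
        have := congrFun hAv idx
        simpa using this
      have h2 : (μ - 1) * v idx = 0 := by linear_combination -h1
      have hμ1 : μ = 1 := by
        rcases mul_eq_zero.mp h2 with h | h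
        · linarith
        · exact absurd h hidx
      right; left
      rw [hμ1]; ring
    · -- b ≠ 0
      have h2 : b • (G p).mulVec v = (μ - (1 - 2*b)) • v := by
        rw [A_eq, Matrix.add_mulVec, Matrix.smul_mulVec, Matrix.one_mulVec,
          Matrix.smul_mulVec] at hAv
        calc b • (G p).mulVec v = μ • v - (1 - 2*b) • v := by rw [← hAv]; abel
          _ = (μ - (1 - 2*b)) • v := (sub_smul _ _ _).symm
      set ν : ℝ := (μ - (1 - 2*b)) / b with hν
      have hGv : (G p).mulVec v = ν • v := by
        calc (G p).mulVec v = b⁻¹ • (b • (G p).mulVec v) := by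
              rw [smul_smul, inv_mul_cancel₀ hbne, one_smul]
          _ = b⁻¹ • ((μ - (1 - 2*b)) • v) := by rw [h2]
          _ = ν • v := by rw [smul_smul, hν]; congr 1; field_simp
      have hinner : (G p * G p - ((p:ℝ)-2) • G p).mulVec v = (ν*ν - ((p:ℝ)-2)*ν) • v := by
        rw [Matrix.sub_mulVec, Matrix.smul_mulVec, ← Matrix.mulVec_mulVec, hGv,
          Matrix.mulVec_smul, hGv, smul_smul, smul_smul, ← sub_smul]
      have h0 : ((G p - (2*(p:ℝ)-2) • 1) * (G p * G p - ((p:ℝ)-2) • G p)).mulVec v = 0 := by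
        rw [cubic hp, Matrix.zero_mulVec]
      rw [← Matrix.mulVec_mulVec, hinner, Matrix.mulVec_smul, Matrix.sub_mulVec,
        Matrix.smul_mulVec, Matrix.one_mulVec, hGv, ← sub_smul, smul_smul] at h0
      have hroot : (ν*ν - ((p:ℝ)-2)*ν) * (ν - (2*(p:ℝ)-2)) = 0 := by
        have h3 := congrFun h0 idx
        simp only [Pi.smul_apply, smul_eq_mul, Pi.zero_apply] at h3
        rcases mul_eq_zero.mp h3 with h | h
        · exact h
        · exact absurd h hidx
      have hbν : b * ν = μ - (1 - 2*b) := by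
        rw [hν]; field_simp
      have hμν : μ = 1 - 2*b + b*ν := by linarith
      rcases mul_eq_zero.mp hroot with h | h
      · have : ν * (ν - ((p:ℝ)-2)) = 0 := by linear_combination h
        rcases mul_eq_zero.mp this with h' | h'
        · right; right
          rw [hμν, h']; ring
        · have hν2 : ν = (p:ℝ) - 2 := by linarith
          right; left
          rw [hμν, hν2]; ring
      · have hν2 : ν = 2*(p:ℝ) - 2 := by linarith
        left
        rw [hμν, hν2]; ring
  · -- {...} ⊆ spectrum
    intro μ hμ
    simp only [Set.mem_insert_iff, Set.mem_singleton_iff] at hμ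
    rcases hμ with rfl | rfl | rfl
    · -- all-ones eigenvector
      refine mem_spec _ _ (fun _ => (1:ℝ)) ?_ hA1
      intro h
      have := congrFun h ⟨{x, z}, Finset.card_pair hxz⟩
      norm_num at this
    · -- eigenvalue 1 + b (p-4)
      have hzy : z ≠ y := hyz.symm
      refine mem_spec _ _
        ((NN p).mulVec (fun k => (if k = x then (1:ℝ) else 0) - (if k = y then 1 else 0))) ?_ ?_
      · intro h
        have hval := v2_val (p := p) hxy hxz hzy
        rw [h] at hval
        norm_num at hval
      · rw [A_eq, Matrix.add_mulVec, Matrix.smul_mulVec, Matrix.one_mulVec,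
          Matrix.smul_mulVec, G_mulVec_w hp hxy, smul_smul, ← add_smul]
        congr 1
        ring
    · -- eigenvalue 1 - 2b
      set v3 : {e : Finset (Fin p) // e.card = 2} → ℝ := fun e =>
          (if e = ⟨{x, z}, Finset.card_pair hxz⟩ then (1:ℝ) else 0)
        - (if e = ⟨{x, u}, Finset.card_pair hxu⟩ then 1 else 0)
        - (if e = ⟨{y, z}, Finset.card_pair hyz⟩ then 1 else 0)
        + (if e = ⟨{y, u}, Finset.card_pair hyu⟩ then 1 else 0) with hv3
      have hGv3 : (G p).mulVec v3 = 0 := by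
        rw [hv3, G, ← Matrix.mulVec_mulVec, Nt_v3 hxy hxz hxu hyz hyu hzu, Matrix.mulVec_zero]
      refine mem_spec _ _ v3 ?_ ?_
      · intro h
        have hne1 : ({x, z} : Finset (Fin p)) ≠ {x, u} := pair_ne_snd hxz.symm hzu
        have hne2 : ({x, z} : Finset (Fin p)) ≠ {y, z} := pair_ne_fst hxy hxz
        have hne3 : ({x, z} : Finset (Fin p)) ≠ {y, u} := pair_ne_snd hyz.symm hzu
        have := congrFun h ⟨{x, z}, Finset.card_pair hxz⟩
        simp only [hv3, Pi.zero_apply, Subtype.mk.injEq, if_pos rfl, if_neg hne1,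
          if_neg hne2, if_neg hne3] at this
        norm_num at this
      · rw [A_eq, Matrix.add_mulVec, Matrix.smul_mulVec, Matrix.one_mulVec,
          Matrix.smul_mulVec, hGv3, smul_zero, add_zero]
end

section
/- Let ζ₁, ζ₂, … be i.i.d. Exp(1) random variables, η_i := −log(ζ₁+⋯+ζ_i), and let (Z_{ij})_{i<j} be i.i.d. standard normals independent of (ζ_i). For c ≥ 0 define Y_c := sup_{i<j} ((η_i + η_j)/√2 + c Z_{ij}). Then Y_c < ∞ almost surely. -/
open MeasureTheory ProbabilityTheory Real
open scoped ENNReal NNReal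

lemma stmt19_precomp {Ω ι ι' β : Type*} [MeasurableSpace Ω] {P : Measure Ω}
    [mβ : MeasurableSpace β] {f : ι → Ω → β}
    (hf : iIndepFun f P) {g : ι' → ι} (hg : Function.Injective g) :
    iIndepFun (fun i => f (g i)) P := by
  rw [iIndepFun_iff_measure_inter_preimage_eq_mul] at hf ⊢
  intro S sets hsets
  classical
  let sets' : ι → Set β := fun i =>
    if h : ∃ i' ∈ S, g i' = i then sets h.choose else Set.univ
  have key : ∀ i₀ ∈ S, sets' (g i₀) = sets i₀ := by
    intro i₀ h₀
    have h : ∃ i' ∈ S, g i' = g i₀ := ⟨i₀, h₀, rfl⟩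
    simp only [sets', dif_pos h]
    rw [hg h.choose_spec.2]
  have hmeas' : ∀ i, MeasurableSet[mβ] (sets' i) := by
    intro i
    simp only [sets']
    split_ifs with h
    · exact hsets _ h.choose_spec.1
    · exact MeasurableSet.univ
  have := hf (S.image g) (sets := sets') (fun i _ => hmeas' i)
  rw [Finset.set_biInter_finset_image, Finset.prod_image
    (fun x _ y _ h => hg h)] at this
  calc P (⋂ i ∈ S, (fun ω => f (g i) ω) ⁻¹' sets i)
      = P (⋂ i ∈ S, f (g i) ⁻¹' sets' (g i)) := by
        congr 1; exact Set.iInter₂_congr fun i hi => by rw [key i hi]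
    _ = ∏ i ∈ S, P (f (g i) ⁻¹' sets' (g i)) := this
    _ = ∏ i ∈ S, P ((fun ω => f (g i) ω) ⁻¹' sets i) :=
        Finset.prod_congr rfl fun i hi => by rw [key i hi]

lemma stmt19_exp_lintegral :
    ∫⁻ x, ENNReal.ofReal (rexp (-x)) ∂(expMeasure 1) = ENNReal.ofReal (1/2) := by
  have hd : expMeasure 1 = volume.withDensity (exponentialPDF 1) := rfl
  have hm1 : Measurable (exponentialPDF 1) := (measurable_exponentialPDFReal 1).ennreal_ofReal
  have hm2 : Measurable (exponentialPDF 2) := (measurable_exponentialPDFReal 2).ennreal_ofReal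
  rw [hd, lintegral_withDensity_eq_lintegral_mul _ hm1 (by fun_prop)]
  have hpt : ∀ x : ℝ, exponentialPDF 1 x * ENNReal.ofReal (rexp (-x))
      = ENNReal.ofReal (1/2) * exponentialPDF 2 x := by
    intro x
    rw [exponentialPDF_eq, exponentialPDF_eq]
    split_ifs with h
    · rw [← ENNReal.ofReal_mul (by positivity), ← ENNReal.ofReal_mul (by norm_num)]
      congr 1
      norm_num
      rw [← Real.exp_add]
      ring_nf
    · simp
  calc ∫⁻ x, (exponentialPDF 1 * fun x => ENNReal.ofReal (rexp (-x))) x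
      = ∫⁻ x, ENNReal.ofReal (1/2) * exponentialPDF 2 x := by
        apply lintegral_congr; intro x; exact hpt x
    _ = ENNReal.ofReal (1/2) * ∫⁻ x, exponentialPDF 2 x :=
        lintegral_const_mul _ hm2
    _ = ENNReal.ofReal (1/2) := by
        rw [lintegral_exponentialPDF_eq_one (by norm_num : (0:ℝ) < 2), mul_one]

lemma stmt19_exp_int : Integrable (fun x => rexp (-x)) (expMeasure 1) := by
  have : IsProbabilityMeasure (expMeasure 1) := isProbabilityMeasure_expMeasure one_pos
  refine ⟨measurable_neg.exp.aestronglyMeasurable, ?_⟩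
  rw [hasFiniteIntegral_iff_ofReal (ae_of_all _ fun x => (exp_pos _).le)]
  rw [stmt19_exp_lintegral]
  exact ENNReal.ofReal_lt_top

lemma stmt19_exp_integral : ∫ x, rexp (-x) ∂(expMeasure 1) = 1/2 := by
  have : IsProbabilityMeasure (expMeasure 1) := isProbabilityMeasure_expMeasure one_pos
  rw [integral_eq_lintegral_of_nonneg_ae (ae_of_all _ fun x => (exp_pos _).le) measurable_neg.exp.aestronglyMeasurable,
    stmt19_exp_lintegral, ENNReal.toReal_ofReal (by norm_num)]

lemma stmt19_exp_mgf {Ω : Type*} [MeasurableSpace Ω] {P : Measure Ω} {X : Ω → ℝ}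
    (hX : Measurable X) (hmap : P.map X = expMeasure 1) :
    Integrable (fun ω => rexp ((-1) * X ω)) P ∧ mgf X P (-1) = 1/2 := by
  constructor
  · have := (integrable_map_measure (f := X) (g := fun x => rexp (-x))
      measurable_neg.exp.aestronglyMeasurable hX.aemeasurable).mp (by rw [hmap]; exact stmt19_exp_int)
    simpa [Function.comp_def] using this
  · rw [mgf, ← stmt19_exp_integral, ← hmap,
      integral_map hX.aemeasurable (measurable_neg.exp.aestronglyMeasurable)]
    simp

lemma stmt19_gauss_lintegral (t : ℝ) :
    ∫⁻ x, ENNReal.ofReal (rexp (t * x)) ∂(gaussianReal 0 1)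
      = ENNReal.ofReal (rexp (t^2/2)) := by
  have hm0 : Measurable (gaussianPDF 0 1) := measurable_gaussianPDF 0 1
  have hmt : Measurable (gaussianPDF t 1) := measurable_gaussianPDF t 1
  rw [gaussianReal_of_var_ne_zero 0 one_ne_zero,
    lintegral_withDensity_eq_lintegral_mul _ hm0 (by fun_prop)]
  have hpt : ∀ x : ℝ, (gaussianPDF 0 1 * fun x => ENNReal.ofReal (rexp (t * x))) x
      = ENNReal.ofReal (rexp (t^2/2)) * gaussianPDF t 1 x := by
    intro x
    simp only [Pi.mul_apply, gaussianPDF, ← ENNReal.ofReal_mul (gaussianPDFReal_nonneg 0 1 x),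
      ← ENNReal.ofReal_mul (exp_pos _).le]
    congr 1
    simp only [gaussianPDFReal, NNReal.coe_one, mul_one, sub_zero]
    rw [mul_assoc, ← Real.exp_add, mul_comm (rexp (t^2/2)), mul_assoc, ← Real.exp_add]
    congr 2
    ring
  rw [lintegral_congr hpt, lintegral_const_mul _ hmt, lintegral_gaussianPDF_eq_one t one_ne_zero,
    mul_one]

lemma stmt19_gauss_int (t : ℝ) : Integrable (fun x => rexp (t * x)) (gaussianReal 0 1) := by
  refine ⟨(measurable_const_mul t).exp.aestronglyMeasurable, ?_⟩
  rw [hasFiniteIntegral_iff_ofReal (ae_of_all _ fun x => (exp_pos _).le),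
    stmt19_gauss_lintegral]
  exact ENNReal.ofReal_lt_top

lemma stmt19_gauss_mgf {Ω : Type*} [MeasurableSpace Ω] {P : Measure Ω} {X : Ω → ℝ}
    (hX : Measurable X) (hmap : P.map X = gaussianReal 0 1) (t : ℝ) :
    Integrable (fun ω => rexp (t * X ω)) P ∧ mgf X P t = rexp (t^2/2) := by
  constructor
  · have := (integrable_map_measure (f := X) (g := fun x => rexp (t * x))
      (measurable_const_mul t).exp.aestronglyMeasurable hX.aemeasurable).mp
      (by rw [hmap]; exact stmt19_gauss_int t)
    simpa [Function.comp_def] using this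
  · rw [mgf, ← integral_map hX.aemeasurable
      (measurable_const_mul t).exp.aestronglyMeasurable, hmap,
      integral_eq_lintegral_of_nonneg_ae (ae_of_all _ fun x => (exp_pos _).le)
        (measurable_const_mul t).exp.aestronglyMeasurable,
      stmt19_gauss_lintegral, ENNReal.toReal_ofReal (exp_pos _).le]
lemma stmt19_gauss_tail {Ω : Type*} [MeasurableSpace Ω] {P : Measure Ω}
    [IsProbabilityMeasure P] {X : Ω → ℝ}
    (hX : Measurable X) (hmap : P.map X = gaussianReal 0 1) {s : ℝ} (hs : 0 ≤ s) :
    P {ω | s ≤ X ω} ≤ ENNReal.ofReal (rexp (-(s^2)/2)) := by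
  have h := measure_ge_le_exp_mul_mgf (μ := P) (X := X) s hs (stmt19_gauss_mgf hX hmap s).1
  rw [(stmt19_gauss_mgf hX hmap s).2, ← Real.exp_add] at h
  have he : -s * s + s^2/2 = -(s^2)/2 := by ring
  rw [he] at h
  calc P {ω | s ≤ X ω} = ENNReal.ofReal ((P {ω | s ≤ X ω}).toReal) :=
        (ENNReal.ofReal_toReal (measure_ne_top _ _)).symm
    _ ≤ ENNReal.ofReal (rexp (-(s^2)/2)) := ENNReal.ofReal_le_ofReal h

lemma stmt19_sum_tail {Ω : Type*} [MeasurableSpace Ω] {P : Measure Ω}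
    [IsProbabilityMeasure P] {g : ℕ → Ω → ℝ}
    (hindep : iIndepFun g P) (hgmeas : ∀ k, Measurable (g k))
    (hmap : ∀ k, P.map (g k) = expMeasure 1) (j : ℕ) :
    P {ω | (∑ k ∈ Finset.range (j+1), g k ω) ≤ (j+1)/2}
      ≤ ENNReal.ofReal ((rexp (1/2) / 2) ^ (j+1)) := by
  have h_int : ∀ k ∈ Finset.range (j+1), Integrable (fun ω => rexp ((-1) * g k ω)) P :=
    fun k _ => (stmt19_exp_mgf (hgmeas k) (hmap k)).1
  have h_int_sum := hindep.integrable_exp_mul_sum hgmeas h_int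
  have h := measure_le_le_exp_mul_mgf (μ := P) (X := ∑ k ∈ Finset.range (j+1), g k)
    (((j:ℝ)+1)/2) (by norm_num : (-1:ℝ) ≤ 0) h_int_sum
  rw [hindep.mgf_sum hgmeas] at h
  have hprod : ∏ k ∈ Finset.range (j+1), mgf (g k) P (-1) = (1/2) ^ (j+1) := by
    rw [Finset.prod_congr rfl fun k _ => (stmt19_exp_mgf (hgmeas k) (hmap k)).2,
      Finset.prod_const, Finset.card_range]
  rw [hprod] at h
  have hset : {ω | (∑ k ∈ Finset.range (j+1), g k ω) ≤ ((j:ℝ)+1)/2}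
      = {ω | (∑ k ∈ Finset.range (j+1), g k) ω ≤ ((j:ℝ)+1)/2} := by
    ext ω; simp [Finset.sum_apply]
  have hval : rexp (-(-1) * (((j:ℝ)+1)/2)) * (1/2) ^ (j+1) = (rexp (1/2) / 2) ^ (j+1) := by
    rw [neg_neg, one_mul, div_pow, one_pow, div_pow]
    rw [show ((j:ℝ)+1)/2 = ((j+1 : ℕ):ℝ) * (1/2) by push_cast; ring, Real.exp_nat_mul]
    ring
  calc P {ω | (∑ k ∈ Finset.range (j+1), g k ω) ≤ ((j:ℝ)+1)/2}
      = ENNReal.ofReal ((P {ω | (∑ k ∈ Finset.range (j+1), g k) ω ≤ ((j:ℝ)+1)/2}).toReal) := by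
        rw [← hset, ENNReal.ofReal_toReal (measure_ne_top _ _)]
    _ ≤ ENNReal.ofReal (rexp (-(-1) * (((j:ℝ)+1)/2)) * (1/2) ^ (j+1)) :=
        ENNReal.ofReal_le_ofReal h
    _ = ENNReal.ofReal ((rexp (1/2) / 2) ^ (j+1)) := by rw [hval]

lemma stmt19_geom_sum :
    ∑' j : ℕ, ENNReal.ofReal ((rexp (1/2) / 2) ^ (j+1)) ≠ ⊤ := by
  set q : ℝ := rexp (1/2) / 2 with hq
  have hq0 : 0 ≤ q := by positivity
  have hq1 : q < 1 := by
    rw [hq, div_lt_one (by norm_num)]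
    calc rexp (1/2) < rexp (Real.log 2) := by
          apply Real.exp_lt_exp.mpr
          linarith [Real.log_two_gt_d9]
      _ = 2 := Real.exp_log (by norm_num)
  set r : ℝ≥0∞ := ENNReal.ofReal q with hr
  have hrofpow : ∀ j : ℕ, ENNReal.ofReal (q ^ (j+1)) = r ^ (j+1) :=
    fun j => ENNReal.ofReal_pow hq0 _
  have hr1 : r < 1 := by
    rw [hr, ← ENNReal.ofReal_one]
    exact ENNReal.ofReal_lt_ofReal_iff_of_nonneg hq0 |>.mpr hq1
  calc ∑' j : ℕ, ENNReal.ofReal (q ^ (j+1)) = ∑' j : ℕ, r * r ^ j := by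
        simp_rw [hrofpow, pow_succ']
    _ = r * (1 - r)⁻¹ := by rw [ENNReal.tsum_mul_left, ENNReal.tsum_geometric]
    _ ≠ ⊤ := by
        apply ENNReal.mul_ne_top ENNReal.ofReal_ne_top
        rw [Ne, ENNReal.inv_eq_top, tsub_eq_zero_iff_le]
        exact fun h => absurd (lt_of_lt_of_le hr1 h) (lt_irrefl _)

lemma stmt19_sq_sum :
    ∑' p : ℕ × ℕ, (ENNReal.ofReal (1/((p.1:ℝ)+1)^2) * ENNReal.ofReal (1/((p.2:ℝ)+1)^2)) ≠ ⊤ := by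
  have hsummable : Summable (fun n : ℕ => 1/((n:ℝ)+1)^2) := by
    have := Real.summable_one_div_nat_pow.mpr (le_refl 2) |>.comp_injective
      (add_left_injective 1)
    simpa [Function.comp] using (summable_nat_add_iff 1).mpr
      (Real.summable_one_div_nat_pow.mpr (le_refl 2))
  have hS : ∑' n : ℕ, ENNReal.ofReal (1/((n:ℝ)+1)^2) ≠ ⊤ := by
    rw [← ENNReal.ofReal_tsum_of_nonneg (fun n => by positivity) hsummable]
    exact ENNReal.ofReal_ne_top
  rw [ENNReal.tsum_prod']
  calc ∑' (a : ℕ) (b : ℕ), ENNReal.ofReal (1/((a:ℝ)+1)^2) * ENNReal.ofReal (1/((b:ℝ)+1)^2)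
      = ∑' a : ℕ, ENNReal.ofReal (1/((a:ℝ)+1)^2) * ∑' b : ℕ, ENNReal.ofReal (1/((b:ℝ)+1)^2) := by
        congr 1; ext a; exact ENNReal.tsum_mul_left
    _ = (∑' a : ℕ, ENNReal.ofReal (1/((a:ℝ)+1)^2)) * ∑' b : ℕ, ENNReal.ofReal (1/((b:ℝ)+1)^2) :=
        ENNReal.tsum_mul_right
    _ ≠ ⊤ := ENNReal.mul_ne_top hS hS

theorem stmt19 {Ω : Type*} [MeasurableSpace Ω] (P : Measure Ω) [IsProbabilityMeasure P]
    (c : ℝ) (hc : 0 ≤ c)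
    (F : (ℕ ⊕ ℕ × ℕ) → Ω → ℝ)
    (hindep : iIndepFun F P)
    (hmeas : ∀ a, Measurable (F a))
    (hexp : ∀ i : ℕ, Measure.map (F (Sum.inl i)) P = expMeasure 1)
    (hgauss : ∀ p : ℕ × ℕ, Measure.map (F (Sum.inr p)) P = gaussianReal 0 1)
    (η : ℕ → Ω → ℝ)
    (hη : ∀ i ω, η i ω = - Real.log (∑ k ∈ Finset.range (i + 1), F (Sum.inl k) ω)) :
    ∀ᵐ ω ∂P, BddAbove (Set.range fun q : {q : ℕ × ℕ // q.1 < q.2} =>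
      (η q.1.1 ω + η q.1.2 ω) / Real.sqrt 2 + c * F (Sum.inr q.1) ω) := by
  have hindep' : iIndepFun (fun k : ℕ => F (Sum.inl k)) P :=
    stmt19_precomp hindep Sum.inl_injective
  have hA : ∀ᵐ ω ∂P,
      {j : ℕ | (∑ k ∈ Finset.range (j+1), F (Sum.inl k) ω) ≤ ((j:ℝ)+1)/2}.Finite := by
    refine ae_finite_setOf_mem
      (s := fun j => {ω | (∑ k ∈ Finset.range (j+1), F (Sum.inl k) ω) ≤ ((j:ℝ)+1)/2}) ?_
    refine ne_top_of_le_ne_top stmt19_geom_sum (ENNReal.tsum_le_tsum fun j => ?_)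
    exact stmt19_sum_tail hindep' (fun k => hmeas _) (fun k => hexp k) j
  have hB : ∀ᵐ ω ∂P, {p : ℕ × ℕ |
      2 * Real.sqrt (Real.log (((p.1:ℝ)+1)*((p.2:ℝ)+1))) ≤ F (Sum.inr p) ω}.Finite := by
    refine ae_finite_setOf_mem (s := fun p => {ω |
      2 * Real.sqrt (Real.log (((p.1:ℝ)+1)*((p.2:ℝ)+1))) ≤ F (Sum.inr p) ω}) ?_
    refine ne_top_of_le_ne_top stmt19_sq_sum (ENNReal.tsum_le_tsum fun p => ?_)
    have hm : (0:ℝ) < ((p.1:ℝ)+1)*((p.2:ℝ)+1) := by positivity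
    set L := Real.log (((p.1:ℝ)+1)*((p.2:ℝ)+1)) with hLdef
    have hL : 0 ≤ L := Real.log_nonneg (by
      have h1 : (1:ℝ) ≤ (p.1:ℝ)+1 := by linarith [Nat.cast_nonneg (α := ℝ) p.1]
      have h2 : (1:ℝ) ≤ (p.2:ℝ)+1 := by linarith [Nat.cast_nonneg (α := ℝ) p.2]
      nlinarith)
    have hs : (0:ℝ) ≤ 2 * Real.sqrt L := by positivity
    refine le_trans (stmt19_gauss_tail (hmeas _) (hgauss p) hs) (le_of_eq ?_)
    have hL4 : (2*Real.sqrt L)^2 = 4*L := by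
      rw [mul_pow, Real.sq_sqrt hL]; norm_num
    have hexp2 : rexp (-((2*Real.sqrt L)^2)/2) = (1/((p.1:ℝ)+1)^2) * (1/((p.2:ℝ)+1)^2) := by
      rw [hL4, show -(4*L)/2 = -L + -L from by ring, Real.exp_add, Real.exp_neg,
        Real.exp_log hm]
      field_simp
    rw [hexp2, ENNReal.ofReal_mul (by positivity)]
  filter_upwards [hA, hB] with ω h1 h2
  obtain ⟨C₀, hC₀⟩ := (h1.image (fun j => η j ω + Real.log ((j:ℝ)+1))).bddAbove
  set C := max C₀ (Real.log 2) with hCdef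
  have hηbound : ∀ i : ℕ, η i ω + Real.log ((i:ℝ)+1) ≤ C := by
    intro i
    by_cases hbad : (∑ k ∈ Finset.range (i+1), F (Sum.inl k) ω) ≤ ((i:ℝ)+1)/2
    · exact le_trans (hC₀ (Set.mem_image_of_mem _ hbad)) (le_max_left _ _)
    · push_neg at hbad
      have hpos : (0:ℝ) < ((i:ℝ)+1)/2 := by positivity
      have hlog : Real.log (((i:ℝ)+1)/2) ≤ Real.log (∑ k ∈ Finset.range (i+1), F (Sum.inl k) ω) :=
        Real.log_le_log hpos hbad.le
      have hld : Real.log (((i:ℝ)+1)/2) = Real.log ((i:ℝ)+1) - Real.log 2 :=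
        Real.log_div (by positivity) two_ne_zero
      rw [hη i ω]
      have := le_max_right C₀ (Real.log 2)
      rw [hCdef]
      linarith
  obtain ⟨D₀, hD₀⟩ := (h2.image (fun p : ℕ × ℕ => F (Sum.inr p) ω -
    2 * Real.sqrt (Real.log (((p.1:ℝ)+1)*((p.2:ℝ)+1))))).bddAbove
  set D := max D₀ 0 with hDdef
  have hD0 : (0:ℝ) ≤ D := le_max_right _ _
  have hZbound : ∀ p : ℕ × ℕ,
      F (Sum.inr p) ω ≤ D + 2 * Real.sqrt (Real.log (((p.1:ℝ)+1)*((p.2:ℝ)+1))) := by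
    intro p
    by_cases hbad : 2 * Real.sqrt (Real.log (((p.1:ℝ)+1)*((p.2:ℝ)+1))) ≤ F (Sum.inr p) ω
    · have := hC₀  -- dummy
      have hb := hD₀ (Set.mem_image_of_mem _ hbad)
      have := le_max_left D₀ (0:ℝ)
      linarith
    · push_neg at hbad
      linarith
  refine ⟨2*C/Real.sqrt 2 + c*D + Real.sqrt 2 * c^2, ?_⟩
  rintro x ⟨⟨⟨i, j⟩, hij⟩, rfl⟩
  simp only
  have hLi : 0 ≤ Real.log ((i:ℝ)+1) :=
    Real.log_nonneg (by linarith [Nat.cast_nonneg (α := ℝ) i])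
  have hLj : 0 ≤ Real.log ((j:ℝ)+1) :=
    Real.log_nonneg (by linarith [Nat.cast_nonneg (α := ℝ) j])
  set L := Real.log ((i:ℝ)+1) + Real.log ((j:ℝ)+1) with hLdef
  have hL : 0 ≤ L := add_nonneg hLi hLj
  have hmul : Real.log (((i:ℝ)+1)*((j:ℝ)+1)) = L :=
    Real.log_mul (by positivity) (by positivity)
  have hZ := hZbound (i, j)
  simp only at hZ
  rw [hmul] at hZ
  have hηi := hηbound i
  have hηj := hηbound j
  have hs2 : (0:ℝ) < Real.sqrt 2 := Real.sqrt_pos.mpr two_pos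
  have h2sq : Real.sqrt 2 ^ 2 = 2 := Real.sq_sqrt (by norm_num)
  have hsL : Real.sqrt L ^ 2 = L := Real.sq_sqrt hL
  have hsLnn : 0 ≤ Real.sqrt L := Real.sqrt_nonneg _
  have hsum : η i ω + η j ω ≤ 2*C - L := by linarith
  have hdiv : (η i ω + η j ω)/Real.sqrt 2 ≤ (2*C - L)/Real.sqrt 2 := by
    apply div_le_div_of_nonneg_right hsum hs2.le
  have hcz : c * F (Sum.inr (i, j)) ω ≤ c * (D + 2*Real.sqrt L) :=
    mul_le_mul_of_nonneg_left hZ hc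
  have hkey : 2*c*Real.sqrt L - L/Real.sqrt 2 ≤ Real.sqrt 2 * c^2 := by
    have hLdiv : L / Real.sqrt 2 * Real.sqrt 2 = L := div_mul_cancel₀ _ hs2.ne'
    nlinarith [sq_nonneg (Real.sqrt L - Real.sqrt 2 * c), hsL, h2sq, hsLnn, hs2, hLdiv]
  have hsub : (2*C - L)/Real.sqrt 2 = 2*C/Real.sqrt 2 - L/Real.sqrt 2 := sub_div _ _ _
  linarith
end
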